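/- arXiv:0911.1191 — 2 statements merged into one kernel-verified Lean document; each statement's English description precedes it below -/
import Mathlib

section
/- Let λ ≥ 1 and ρ > 0, and let Q and Q̃ be nonempty compact subsets of ℝ² each of diameter at most λρ. For any x ∈ Q and x̃ ∈ Q̃ with x ≠ x̃, the Lebesgue measure of the set Θ_{Q,Q̃} = {θ ∈ [−π/2, π/2] : proj_θ(Q) ∩ proj_θ(Q̃) ≠ ∅} is at most 2πλ · ρ / |x − x̃|, where |x − x̃| denotes the Euclidean distance between x and x̃. -/
open MeasureTheory Set Metric Real

noncomputable section

/-- The orthogonal projection of the plane onto the line through the origin in direction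
`(cos θ, sin θ)`, identified with `ℝ`. -/
def projTheta (θ : ℝ) (p : ℝ × ℝ) : ℝ := p.1 * Real.cos θ + p.2 * Real.sin θ

/-- `K`, together with the Markov partition `I : Fin r → Set ℝ` and the expanding map `ψ`,
is a regular Cantor set of class `C^{1+α}`. -/
def IsCantorSystem (α : ℝ) (K : Set ℝ) (r : ℕ) (I : Fin r → Set ℝ) (ψ : ℝ → ℝ) : Prop :=
  0 < r ∧ IsCompact K ∧
  (∀ i, ∃ a b : ℝ, a ≤ b ∧ I i = Icc a b) ∧
  (∀ i, I i ⊆ Icc (0 : ℝ) 1) ∧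
  Pairwise (Function.onFun Disjoint I) ∧
  (K ⊆ ⋃ i, I i) ∧
  (∀ i, frontier (I i) ⊆ K) ∧
  (∃ U : Set ℝ, IsOpen U ∧ (⋃ i, I i) ⊆ U ∧
    (∀ x ∈ U, DifferentiableAt ℝ ψ x) ∧
    (∃ C : ℝ, ∀ x ∈ U, ∀ y ∈ U, |deriv ψ x - deriv ψ y| ≤ C * |x - y| ^ α) ∧
    (∀ x ∈ U, 1 < |deriv ψ x|)) ∧
  (∀ i, ∃ S : Finset (Fin r), ψ '' I i = convexHull ℝ (⋃ j ∈ S, I j)) ∧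
  (∀ i, ∃ N : ℕ, ∀ n ≥ N, ψ^[n] '' (K ∩ I i) = K) ∧
  K = ⋂ n : ℕ, (ψ^[n]) ⁻¹' (⋃ i, I i)

/-- `K` is a regular Cantor set of class `C^{1+α}`. -/
def IsRegularCantorSet (α : ℝ) (K : Set ℝ) : Prop :=
  ∃ (r : ℕ) (I : Fin r → Set ℝ) (ψ : ℝ → ℝ), IsCantorSystem α K r I ψ

/-- A ρ-decomposition of a set `K ⊆ ℝ²`: a finite collection of pairwise disjoint closed
rectangles, each intersecting `K`, whose union covers `K`, and all of whose side lengths lie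
in `[ρ, λρ]`. -/
def IsRhoDecomposition (lam ρ : ℝ) (K : Set (ℝ × ℝ)) (F : Finset (Set (ℝ × ℝ))) : Prop :=
  (∀ Q ∈ F, ∃ a b c e : ℝ,
      Q = Icc a b ×ˢ Icc c e ∧ ρ ≤ b - a ∧ b - a ≤ lam * ρ ∧ ρ ≤ e - c ∧ e - c ≤ lam * ρ) ∧
  (∀ Q ∈ F, (Q ∩ K).Nonempty) ∧
  (K ⊆ ⋃ Q ∈ F, Q) ∧
  (∀ Q ∈ F, ∀ Q' ∈ F, Q ≠ Q' → Disjoint Q Q')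

/-- The number `N_F(θ)` of ordered pairs `(Q, Q̃) ∈ F × F` whose projections in
direction `θ` intersect. -/
def NPairs (F : Finset (Set (ℝ × ℝ))) (θ : ℝ) : ℕ :=
  {p : Set (ℝ × ℝ) × Set (ℝ × ℝ) |
    p.1 ∈ F ∧ p.2 ∈ F ∧ (projTheta θ '' p.1 ∩ projTheta θ '' p.2).Nonempty}.ncard


lemma projTheta_lip (θ : ℝ) (p q : ℝ × ℝ) :
    |projTheta θ p - projTheta θ q| ≤ Real.sqrt ((p.1 - q.1) ^ 2 + (p.2 - q.2) ^ 2) := by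
  rw [← Real.sqrt_sq_eq_abs]
  apply Real.sqrt_le_sqrt
  have h := Real.sin_sq_add_cos_sq θ
  have h2 := sq_nonneg ((p.1 - q.1) * Real.sin θ - (p.2 - q.2) * Real.cos θ)
  unfold projTheta
  nlinarith

lemma sin_small_near_multiple {u c : ℝ} (hu : |u| ≤ π) (h : |Real.sin u| ≤ c) :
    |u| ≤ π / 2 * c ∨ |u - π| ≤ π / 2 * c ∨ |u + π| ≤ π / 2 * c := by
  have hπ := Real.pi_pos
  have main : ∀ v : ℝ, 0 ≤ v → v ≤ π → |Real.sin v| ≤ c →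
      v ≤ π / 2 * c ∨ π - v ≤ π / 2 * c := by
    intro v hv0 hvπ hs
    rcases le_total v (π / 2) with hv | hv
    · left
      have h1 := Real.mul_le_sin hv0 hv
      have h2 : Real.sin v ≤ c := le_trans (le_abs_self _) hs
      have h4 : 2 / π * v ≤ c := le_trans h1 h2
      have h5 := mul_le_mul_of_nonneg_left h4 hπ.le
      have h6 : π * (2 / π) = 2 := by field_simp
      rw [← mul_assoc, h6] at h5
      linarith
    · right
      have h0 : (0 : ℝ) ≤ π - v := by linarith
      have h1 : π - v ≤ π / 2 := by linarith
      have h3 := Real.mul_le_sin h0 h1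
      rw [Real.sin_pi_sub] at h3
      have h2 : Real.sin v ≤ c := le_trans (le_abs_self _) hs
      have h4 : 2 / π * (π - v) ≤ c := le_trans h3 h2
      have h5 := mul_le_mul_of_nonneg_left h4 hπ.le
      have h6 : π * (2 / π) = 2 := by field_simp
      rw [← mul_assoc, h6] at h5
      linarith
  rcases abs_le.mp hu with ⟨hul, hur⟩
  rcases le_total 0 u with h0 | h0
  · rcases main u h0 hur h with h' | h'
    · left; rwa [abs_of_nonneg h0]
    · right; left
      rw [abs_sub_comm, abs_of_nonneg (by linarith)]
      exact h'
  · have hs' : |Real.sin (-u)| ≤ c := by rwa [Real.sin_neg, abs_neg]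
    rcases main (-u) (by linarith) (by linarith) hs' with h' | h'
    · left; rw [abs_of_nonpos h0]; exact h'
    · right; right
      rw [abs_of_nonneg (by linarith)]
      linarith

lemma three_interval_bound (ψ s : ℝ) (hψ1 : -(π / 2) ≤ ψ) (hψ2 : ψ ≤ π / 2)
    (hs0 : 0 ≤ s) (hs : s ≤ π / 2) :
    volume (Icc (-(π / 2)) (π / 2) ∩
      (Icc (ψ - π - s) (ψ - π + s) ∪ Icc (ψ - s) (ψ + s) ∪ Icc (ψ + π - s) (ψ + π + s)))
      ≤ ENNReal.ofReal (2 * s) := by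
  have hπ := Real.pi_pos
  set m1 : ℝ := max 0 (s - π / 2 - ψ) with hm1
  set m3 : ℝ := max 0 (ψ + s - π / 2) with hm3
  have hm1n : 0 ≤ m1 := le_max_left _ _
  have hm3n : 0 ≤ m3 := le_max_left _ _
  have hm1s : m1 ≤ s := max_le hs0 (by linarith)
  have hm3s : m3 ≤ s := max_le hs0 (by linarith)
  have t1 : volume (Icc (-(π / 2)) (π / 2) ∩ Icc (ψ - π - s) (ψ - π + s))
      ≤ ENNReal.ofReal m3 := by
    have hsub : Icc (-(π / 2)) (π / 2) ∩ Icc (ψ - π - s) (ψ - π + s)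
        ⊆ Icc (-(π / 2)) (ψ - π + s) := fun t ht => Set.mem_Icc.mpr ⟨ht.1.1, ht.2.2⟩
    refine le_trans (measure_mono hsub) ?_
    rw [Real.volume_Icc]
    apply ENNReal.ofReal_le_ofReal
    rcases max_cases (0 : ℝ) (ψ + s - π / 2) with ⟨e, l⟩ | ⟨e, l⟩ <;>
      rw [hm3, e] <;> linarith
  have t3 : volume (Icc (-(π / 2)) (π / 2) ∩ Icc (ψ + π - s) (ψ + π + s))
      ≤ ENNReal.ofReal m1 := by
    have hsub : Icc (-(π / 2)) (π / 2) ∩ Icc (ψ + π - s) (ψ + π + s)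
        ⊆ Icc (ψ + π - s) (π / 2) := fun t ht => Set.mem_Icc.mpr ⟨ht.2.1, ht.1.2⟩
    refine le_trans (measure_mono hsub) ?_
    rw [Real.volume_Icc]
    apply ENNReal.ofReal_le_ofReal
    rcases max_cases (0 : ℝ) (s - π / 2 - ψ) with ⟨e, l⟩ | ⟨e, l⟩ <;>
      rw [hm1, e] <;> linarith
  have t2 : volume (Icc (-(π / 2)) (π / 2) ∩ Icc (ψ - s) (ψ + s))
      ≤ ENNReal.ofReal (2 * s - m1 - m3) := by
    rw [Set.Icc_inter_Icc, Real.volume_Icc]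
    apply ENNReal.ofReal_le_ofReal
    rcases max_cases (0 : ℝ) (s - π / 2 - ψ) with ⟨e1, l1⟩ | ⟨e1, l1⟩ <;>
      rcases max_cases (0 : ℝ) (ψ + s - π / 2) with ⟨e3, l3⟩ | ⟨e3, l3⟩ <;>
      rcases min_cases (π / 2) (ψ + s) with ⟨e2, l2⟩ | ⟨e2, l2⟩ <;>
      rcases max_cases (-(π / 2)) (ψ - s) with ⟨e4, l4⟩ | ⟨e4, l4⟩ <;>
      rw [hm1, hm3, e1, e3, e2, e4] <;> linarith
  have step : volume (Icc (-(π / 2)) (π / 2) ∩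
      (Icc (ψ - π - s) (ψ - π + s) ∪ Icc (ψ - s) (ψ + s) ∪ Icc (ψ + π - s) (ψ + π + s)))
      ≤ ENNReal.ofReal m3 + ENNReal.ofReal (2 * s - m1 - m3) + ENNReal.ofReal m1 := by
    rw [Set.inter_union_distrib_left, Set.inter_union_distrib_left]
    refine le_trans (measure_union_le _ _) ?_
    exact add_le_add (le_trans (measure_union_le _ _) (add_le_add t1 t2)) t3
  refine le_trans step ?_
  rw [← ENNReal.ofReal_add hm3n (by linarith), ← ENNReal.ofReal_add (by linarith) hm1n]
  apply ENNReal.ofReal_le_ofReal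
  linarith


/-- **Transversality estimate.** If `Q, Q̃ ⊆ ℝ²` are nonempty compact sets of (Euclidean)
diameter at most `λρ`, and `x ∈ Q`, `x̃ ∈ Q̃` are distinct, then the set of angles
`θ ∈ [-π/2, π/2]` for which `proj_θ(Q)` and `proj_θ(Q̃)` intersect has Lebesgue measure at
most `2πλρ / |x - x̃|`. -/
theorem measure_angles_projections_intersect_le
    (lam ρ : ℝ) (hlam : 1 ≤ lam) (hρ : 0 < ρ)
    (Q Q' : Set (ℝ × ℝ)) (hQne : Q.Nonempty) (hQ'ne : Q'.Nonempty)
    (hQc : IsCompact Q) (hQ'c : IsCompact Q')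
    (hQdiam : ∀ p ∈ Q, ∀ q ∈ Q,
      Real.sqrt ((p.1 - q.1) ^ 2 + (p.2 - q.2) ^ 2) ≤ lam * ρ)
    (hQ'diam : ∀ p ∈ Q', ∀ q ∈ Q',
      Real.sqrt ((p.1 - q.1) ^ 2 + (p.2 - q.2) ^ 2) ≤ lam * ρ)
    (x x' : ℝ × ℝ) (hx : x ∈ Q) (hx' : x' ∈ Q') (hxx' : x ≠ x') :
    volume {θ ∈ Icc (-(π / 2)) (π / 2) |
        (projTheta θ '' Q ∩ projTheta θ '' Q').Nonempty} ≤
      ENNReal.ofReal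
        (2 * π * lam * ρ / Real.sqrt ((x.1 - x'.1) ^ 2 + (x.2 - x'.2) ^ 2)) := by
  have hπ := Real.pi_pos
  set S := {θ ∈ Icc (-(π / 2)) (π / 2) |
      (projTheta θ '' Q ∩ projTheta θ '' Q').Nonempty} with hSdef
  set a := x.1 - x'.1 with ha
  set b := x.2 - x'.2 with hb
  set d := Real.sqrt (a ^ 2 + b ^ 2) with hd
  have hab : a ≠ 0 ∨ b ≠ 0 := by
    by_contra h
    push_neg at h
    exact hxx' (Prod.ext (by have := h.1; simp [ha] at this; linarith)
      (by have := h.2; simp [hb] at this; linarith))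
  have hd0 : 0 < d := by
    apply Real.sqrt_pos.mpr
    rcases hab with h | h <;> positivity
  -- key bound on S
  have key : ∀ θ ∈ S, |a * Real.cos θ + b * Real.sin θ| ≤ 2 * (lam * ρ) := by
    rintro θ ⟨hθI, y, ⟨⟨p, hp, hpy⟩, ⟨q, hq, hqy⟩⟩⟩
    have h1 : |projTheta θ x - projTheta θ p| ≤ lam * ρ :=
      (projTheta_lip θ x p).trans (hQdiam x hx p hp)
    have h2 : |projTheta θ q - projTheta θ x'| ≤ lam * ρ :=
      (projTheta_lip θ q x').trans (hQ'diam q hq x' hx')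
    have heq : a * Real.cos θ + b * Real.sin θ
        = (projTheta θ x - projTheta θ p) + (projTheta θ q - projTheta θ x') := by
      rw [hpy, hqy]
      simp only [projTheta, ha, hb]
      ring
    rw [heq]
    calc |(projTheta θ x - projTheta θ p) + (projTheta θ q - projTheta θ x')|
        ≤ |projTheta θ x - projTheta θ p| + |projTheta θ q - projTheta θ x'| := abs_add_le _ _
      _ ≤ 2 * (lam * ρ) := by linarith
  -- the phase
  set z : ℂ := ⟨a, b⟩ with hz
  have hz0 : z ≠ 0 := by
    simp only [hz, ne_eq, Complex.ext_iff, Complex.zero_re, Complex.zero_im]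
    tauto
  have habs : ‖z‖ = d := by
    rw [Complex.norm_def, hd]
    congr 1
    simp [Complex.normSq_apply, hz]
    ring
  set φ := Complex.arg z with hφ
  have hcos : Real.cos φ = a / d := by
    rw [hφ, Complex.cos_arg hz0, habs]
  have hsin : Real.sin φ = b / d := by
    rw [hφ, Complex.sin_arg, habs]
  have hcossub : ∀ θ : ℝ, d * Real.cos (θ - φ) = a * Real.cos θ + b * Real.sin θ := by
    intro θ
    rw [Real.cos_sub, hcos, hsin]
    field_simp
  set c := 2 * lam * ρ / d with hc
  have hc0 : 0 < c := by
    apply div_pos (by nlinarith) hd0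
  have hgoal_eq : 2 * π * lam * ρ / d = π * c := by
    rw [hc]; field_simp
  have hkeyc : ∀ θ ∈ S, |Real.cos (θ - φ)| ≤ c := by
    intro θ hθ
    have h1 := key θ hθ
    rw [← hcossub θ, abs_mul, abs_of_pos hd0] at h1
    rw [hc, le_div_iff₀ hd0]
    linarith
  rcases le_total 1 c with hc1 | hc1
  · -- trivial case
    have hsub : S ⊆ Icc (-(π / 2)) (π / 2) := fun θ hθ => hθ.1
    refine le_trans (measure_mono hsub) ?_
    rw [Real.volume_Icc, hgoal_eq]
    apply ENNReal.ofReal_le_ofReal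
    nlinarith
  · -- main case
    set s := π / 2 * c with hs
    have hs0 : 0 ≤ s := by positivity
    have hsπ : s ≤ π / 2 := by nlinarith
    set k : ℤ := round ((φ - π / 2) / π) with hk
    set ψ := φ - π / 2 - k * π with hψdef
    clear_value ψ
    clear_value k
    clear_value s
    have hψbound : |ψ| ≤ π / 2 := by
      have h1 : |(φ - π / 2) / π - (k : ℝ)| ≤ 1 / 2 := by
        rw [hk]; exact abs_sub_round _
      have h2 : ψ = ((φ - π / 2) / π - k) * π := by
        rw [hψdef, sub_mul, div_mul_cancel₀ _ hπ.ne']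
      rw [h2, abs_mul, abs_of_pos hπ]
      calc |(φ - π / 2) / π - ↑k| * π ≤ 1 / 2 * π := by
            apply mul_le_mul_of_nonneg_right h1 hπ.le
        _ = π / 2 := by ring
    have hψ1 : -(π / 2) ≤ ψ := by linarith [(abs_le.mp hψbound).1]
    have hψ2 : ψ ≤ π / 2 := (abs_le.mp hψbound).2
    have habs_sin : ∀ θ : ℝ, |Real.sin (θ - ψ)| = |Real.cos (θ - φ)| := by
      intro θ
      have h1 : θ - ψ = (θ - φ + π / 2) + (k : ℤ) * π := by
        rw [hψdef]; push_cast; ring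
      rw [h1, Real.sin_add_int_mul_pi, Real.sin_add_pi_div_two]
      rcases Int.even_or_odd k with he | ho
      · rw [he.neg_one_zpow, one_mul]
      · rw [ho.neg_one_zpow, neg_one_mul, abs_neg]
    have hsub : S ⊆ Icc (-(π / 2)) (π / 2) ∩
        (Icc (ψ - π - s) (ψ - π + s) ∪ Icc (ψ - s) (ψ + s) ∪ Icc (ψ + π - s) (ψ + π + s)) := by
      intro θ hθ
      have hθI : θ ∈ Icc (-(π / 2)) (π / 2) := hθ.1
      refine ⟨hθI, ?_⟩
      have hb1 : |Real.sin (θ - ψ)| ≤ c := by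
        rw [habs_sin θ]; exact hkeyc θ hθ
      have huπ : |θ - ψ| ≤ π := by
        rw [abs_le]
        refine ⟨by linarith [hθI.1, hψ2], by linarith [hθI.2, hψ1]⟩
      rcases sin_small_near_multiple huπ hb1 with h | h | h
      · left; right
        rcases abs_le.mp h with ⟨h1, h2⟩
        exact Set.mem_Icc.mpr ⟨by rw [hs]; linarith, by rw [hs]; linarith⟩
      · right
        rcases abs_le.mp h with ⟨h1, h2⟩
        exact Set.mem_Icc.mpr ⟨by rw [hs]; linarith, by rw [hs]; linarith⟩
      · left; left
        rcases abs_le.mp h with ⟨h1, h2⟩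
        exact Set.mem_Icc.mpr ⟨by rw [hs]; linarith, by rw [hs]; linarith⟩
    refine le_trans (measure_mono hsub) ?_
    refine le_trans (three_interval_bound ψ s hψ1 hψ2 hs0 hsπ) ?_
    apply ENNReal.ofReal_le_ofReal
    rw [hgoal_eq, hs]
    linarith

end
end

section
/- Let (K, ψ) be a regular Cantor set of class C¹ (ψ differentiable with continuous derivative, expanding) with Markov partition {I₁,…,I_r}, and let λ = sup{|ψ'(x)| : x ∈ I₁ ∪ ⋯ ∪ I_r}. Then for every sufficiently small ρ > 0 there exists a finite collection of pairwise disjoint closed intervals in ℝ, each intersecting K, whose union covers K, and whose lengths all lie in the interval [ρ, λρ]. -/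
open MeasureTheory Set Metric Real

noncomputable section

/-- `K`, together with the Markov partition `I : Fin r → Set ℝ` and the expanding map `ψ`,
is a regular Cantor set of class `C¹`. -/
def IsCantorSystemC1 (K : Set ℝ) (r : ℕ) (I : Fin r → Set ℝ) (ψ : ℝ → ℝ) : Prop :=
  0 < r ∧ IsCompact K ∧
  (∀ i, ∃ a b : ℝ, a ≤ b ∧ I i = Icc a b) ∧
  (∀ i, I i ⊆ Icc (0 : ℝ) 1) ∧
  Pairwise (Function.onFun Disjoint I) ∧
  (K ⊆ ⋃ i, I i) ∧
  (∀ i, frontier (I i) ⊆ K) ∧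
  (∃ U : Set ℝ, IsOpen U ∧ (⋃ i, I i) ⊆ U ∧
    (∀ x ∈ U, DifferentiableAt ℝ ψ x) ∧
    ContinuousOn (deriv ψ) U ∧
    (∀ x ∈ U, 1 < |deriv ψ x|)) ∧
  (∀ i, ∃ S : Finset (Fin r), ψ '' I i = convexHull ℝ (⋃ j ∈ S, I j)) ∧
  (∀ i, ∃ N : ℕ, ∀ n ≥ N, ψ^[n] '' (K ∩ I i) = K) ∧
  K = ⋂ n : ℕ, (ψ^[n]) ⁻¹' (⋃ i, I i)

private lemma greedy_cover (K : Set ℝ) (hKi : interior K = ∅)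
    (ρ lam : ℝ) (hρ : 0 < ρ) (hl : 1 < lam) :
    ∀ n : ℕ, ∀ C : Set ℝ, IsCompact C → C ⊆ K →
      (C = ∅ ∨ sSup C < sInf C + n * ρ) →
    ∃ F : Finset (Set ℝ),
      (∀ J ∈ F, ∃ a b : ℝ, a ≤ b ∧ J = Icc a b ∧ ρ ≤ b - a ∧ b - a ≤ lam * ρ) ∧
      (∀ J ∈ F, (J ∩ C).Nonempty) ∧
      (C ⊆ ⋃ J ∈ F, J) ∧
      (∀ J ∈ F, J ⊆ Ici (sInf C)) ∧
      (∀ J1 ∈ F, ∀ J2 ∈ F, J1 ≠ J2 → Disjoint J1 J2) := by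
  classical
  intro n
  induction n with
  | zero =>
    intro C hC hCK hbound
    rcases eq_empty_or_nonempty C with rfl | hne
    · exact ⟨∅, by simp, by simp, by simp, by simp, by simp⟩
    · exfalso
      rcases hbound with h0 | hlt
      · exact hne.ne_empty h0
      · have : sInf C ≤ sSup C := csInf_le_csSup hne hC.bddBelow hC.bddAbove
        simp at hlt; linarith
  | succ n ih =>
    intro C hC hCK hbound
    rcases eq_empty_or_nonempty C with rfl | hne
    · exact ⟨∅, by simp, by simp, by simp, by simp, by simp⟩
    have hlt : sSup C < sInf C + (n + 1) * ρ := by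
      rcases hbound with h0 | hlt
      · exact absurd h0 hne.ne_empty
      · exact_mod_cast hlt
    set a := sInf C with ha
    have haC : a ∈ C := hC.sInf_mem hne
    have hIoo : ¬ (Ioo (a + ρ) (a + lam * ρ) ⊆ K) := by
      intro hsub
      have h1 : Ioo (a + ρ) (a + lam * ρ) ⊆ interior K :=
        interior_maximal hsub isOpen_Ioo
      have h2 : a + ρ < a + lam * ρ := by nlinarith
      obtain ⟨m, hm⟩ := nonempty_Ioo.2 h2
      have := h1 hm
      rw [hKi] at this
      exact this
    obtain ⟨t, htI, htK⟩ := not_subset.1 hIoo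
    have hat : a + ρ < t := htI.1
    have hta : t < a + lam * ρ := htI.2
    have hat' : a ≤ t := by linarith
    set C' := C ∩ Ici t with hC'
    have hC'c : IsCompact C' := hC.inter_right isClosed_Ici
    have hC'K : C' ⊆ K := fun x hx => hCK hx.1
    have hC'gt : ∀ x ∈ C', t < x := by
      intro x hx
      rcases (show t ≤ x from hx.2).lt_or_eq with h | h
      · exact h
      · exact absurd (h ▸ hCK hx.1) htK
    have hinfC' : ∀ (hne' : C'.Nonempty), t < sInf C' := by
      intro hne'
      exact hC'gt _ (hC'c.sInf_mem hne')
    have hbound' : C' = ∅ ∨ sSup C' < sInf C' + n * ρ := by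
      rcases eq_empty_or_nonempty C' with h | hne'
      · exact Or.inl h
      · right
        have h1 : sSup C' ≤ sSup C := csSup_le_csSup hC.bddAbove hne' inter_subset_left
        have h2 : t ≤ sInf C' := (hinfC' hne').le
        linarith
    obtain ⟨F', hF'1, hF'2, hF'3, hF'4, hF'5⟩ := ih C' hC'c hC'K hbound'
    have hC'ne : ∀ J ∈ F', C'.Nonempty := by
      intro J hJ
      obtain ⟨x, hx⟩ := hF'2 J hJ
      exact ⟨x, hx.2⟩
    have hJ'sub : ∀ J ∈ F', J ⊆ Ioi t := by
      intro J hJ x hx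
      exact lt_of_lt_of_le (hinfC' (hC'ne J hJ)) (hF'4 J hJ hx)
    refine ⟨insert (Icc a t) F', ?_, ?_, ?_, ?_, ?_⟩
    · intro J hJ
      rcases Finset.mem_insert.1 hJ with rfl | hJ
      · exact ⟨a, t, hat', rfl, by linarith, by linarith⟩
      · exact hF'1 J hJ
    · intro J hJ
      rcases Finset.mem_insert.1 hJ with rfl | hJ
      · exact ⟨a, ⟨le_refl a, hat'⟩, haC⟩
      · obtain ⟨x, hx1, hx2⟩ := hF'2 J hJ
        exact ⟨x, hx1, hx2.1⟩
    · intro x hx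
      by_cases hxt : x ≤ t
      · have : x ∈ Icc a t := ⟨csInf_le hC.bddBelow hx, hxt⟩
        exact mem_iUnion₂.2 ⟨Icc a t, Finset.mem_insert_self _ _, this⟩
      · have hx' : x ∈ C' := ⟨hx, le_of_lt (not_le.1 hxt)⟩
        obtain ⟨J, hJ, hxJ⟩ := mem_iUnion₂.1 (hF'3 hx')
        exact mem_iUnion₂.2 ⟨J, Finset.mem_insert_of_mem hJ, hxJ⟩
    · intro J hJ
      rcases Finset.mem_insert.1 hJ with rfl | hJ
      · exact fun x hx => hx.1
      · intro x hx
        exact le_trans hat' (hJ'sub J hJ hx).le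
    · intro J1 hJ1 J2 hJ2 hne12
      rcases Finset.mem_insert.1 hJ1 with rfl | hJ1 <;>
        rcases Finset.mem_insert.1 hJ2 with rfl | hJ2
      · exact absurd rfl hne12
      · exact Set.disjoint_left.2 fun x hx hx2 => absurd (hJ'sub J2 hJ2 hx2) (not_lt.2 hx.2)
      · exact Set.disjoint_left.2 fun x hx hx2 => absurd (hJ'sub J1 hJ1 hx) (not_lt.2 hx2.2)
      · exact hF'5 J1 hJ1 J2 hJ2 hne12

private lemma interior_K_empty (K : Set ℝ) (r : ℕ) (I : Fin r → Set ℝ) (ψ : ℝ → ℝ)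
    (U : Set ℝ) (hIU : (⋃ i, I i) ⊆ U)
    (hdiff : ∀ x ∈ U, DifferentiableAt ℝ ψ x)
    (μ : ℝ) (hμ : 1 < μ)
    (hmin : ∀ x ∈ ⋃ i, I i, μ ≤ |deriv ψ x|)
    (hI01 : ∀ i, I i ⊆ Icc (0 : ℝ) 1)
    (hKeq : K = ⋂ n : ℕ, (ψ^[n]) ⁻¹' (⋃ i, I i)) :
    interior K = ∅ := by
  by_contra hne
  obtain ⟨z, hz⟩ := nonempty_iff_ne_empty.2 hne
  obtain ⟨ε, hε, hball⟩ := Metric.mem_nhds_iff.1 (mem_interior_iff_mem_nhds.1 hz)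
  have hIcc : Icc (z - ε/2) (z + ε/2) ⊆ K := by
    intro w hw
    apply hball
    rw [Real.ball_eq_Ioo]
    constructor <;> [linarith [hw.1]; linarith [hw.2]]
  set x := z - ε/2
  set y := z + ε/2
  have hxy : x < y := by simp only [x, y]; linarith
  have hiter : ∀ n : ℕ, ψ^[n] '' K ⊆ ⋃ i, I i := by
    intro n w hw
    obtain ⟨v, hv, rfl⟩ := hw
    rw [hKeq] at hv
    exact mem_iInter.1 hv n
  have claim : ∀ n : ℕ, ∃ a b : ℝ, a < b ∧ μ ^ n * (y - x) ≤ b - a ∧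
      Icc a b ⊆ ψ^[n] '' K := by
    intro n
    induction n with
    | zero =>
      exact ⟨x, y, hxy, by simp, by simpa using hIcc⟩
    | succ n ih =>
      obtain ⟨a, b, hab, hlen, hsub⟩ := ih
      have hsubI : Icc a b ⊆ ⋃ i, I i := hsub.trans (hiter n)
      have hsubU : Icc a b ⊆ U := hsubI.trans hIU
      have hcont : ContinuousOn ψ (Icc a b) := fun w hw =>
        (hdiff w (hsubU hw)).continuousAt.continuousWithinAt
      have hdiff' : DifferentiableOn ℝ ψ (Ioo a b) := fun w hw =>
        (hdiff w (hsubU (Ioo_subset_Icc_self hw))).differentiableWithinAt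
      obtain ⟨c, hc, hcder⟩ := exists_deriv_eq_slope ψ hab hcont hdiff'
      have hcI : c ∈ ⋃ i, I i := hsubI (Ioo_subset_Icc_self hc)
      have hμc : μ ≤ |deriv ψ c| := hmin c hcI
      have hslope : ψ b - ψ a = deriv ψ c * (b - a) := by
        rw [hcder, div_mul_cancel₀ _ (by linarith : b - a ≠ 0)]
      have habs : |ψ b - ψ a| = |deriv ψ c| * (b - a) := by
        rw [hslope, abs_mul, abs_of_pos (by linarith : (0:ℝ) < b - a)]
      set a' := min (ψ a) (ψ b)
      set b' := max (ψ a) (ψ b)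
      have hlen' : b' - a' = |ψ b - ψ a| := by
        simpa using max_sub_min_eq_abs (ψ a) (ψ b)
      have hlen'' : b' - a' = |deriv ψ c| * (b - a) := by
        rw [hlen', habs]
      have hμpos : (0:ℝ) < μ := by linarith
      have ha'b' : a' < b' := by
        have : (0:ℝ) < |deriv ψ c| * (b - a) := by
          have h1 : (0:ℝ) < |deriv ψ c| := lt_of_lt_of_le (by linarith) hμc
          nlinarith
        linarith [hlen'']
      refine ⟨a', b', ha'b', ?_, ?_⟩
      · rw [hlen'']
        have h1 : μ ^ (n+1) * (y - x) = μ * (μ ^ n * (y - x)) := by ring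
        have h2 : μ * (μ ^ n * (y - x)) ≤ μ * (b - a) :=
          mul_le_mul_of_nonneg_left hlen hμpos.le
        have h3 : μ * (b - a) ≤ |deriv ψ c| * (b - a) :=
          mul_le_mul_of_nonneg_right hμc (by linarith)
        linarith
      · have h2 : uIcc (ψ a) (ψ b) ⊆ ψ '' uIcc a b := by
          apply intermediate_value_uIcc
          rwa [uIcc_of_le hab.le]
        rw [uIcc_of_le hab.le] at h2
        have h3 : ψ '' Icc a b ⊆ ψ '' (ψ^[n] '' K) := image_mono hsub
        have h4 : ψ '' (ψ^[n] '' K) = ψ^[n+1] '' K := by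
          rw [← Set.image_comp, ← Function.iterate_succ']
        calc Icc a' b' = uIcc (ψ a) (ψ b) := by rw [uIcc]
          _ ⊆ ψ '' Icc a b := h2
          _ ⊆ ψ^[n+1] '' K := h4 ▸ h3
  have hbd : ∀ n : ℕ, μ ^ n * (y - x) ≤ 1 := by
    intro n
    obtain ⟨a, b, hab, hlen, hsub⟩ := claim n
    have hI : Icc a b ⊆ Icc (0:ℝ) 1 := (hsub.trans (hiter n)).trans (iUnion_subset hI01)
    have ha : a ∈ Icc (0:ℝ) 1 := hI ⟨le_refl a, hab.le⟩
    have hb : b ∈ Icc (0:ℝ) 1 := hI ⟨hab.le, le_refl b⟩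
    linarith [ha.1, hb.2, hlen]
  obtain ⟨n, hn⟩ := pow_unbounded_of_one_lt (1 / (y - x)) hμ
  have hyx : (0:ℝ) < y - x := by linarith
  have : 1 < μ ^ n * (y - x) := by
    rw [div_lt_iff₀ hyx] at hn
    linarith
  linarith [hbd n]

/-- **Existence of `ρ`-decompositions.** If `(K, ψ)` is a regular Cantor set of class `C¹`
with Markov partition `I₁, …, I_r` and `λ = sup {|ψ'(x)| : x ∈ I₁ ∪ ⋯ ∪ I_r}`, then for
every sufficiently small `ρ > 0` there is a finite collection of pairwise disjoint closed
intervals, each intersecting `K`, covering `K`, all of whose lengths lie in `[ρ, λρ]`. -/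
theorem exists_rho_decomposition
    (K : Set ℝ) (r : ℕ) (I : Fin r → Set ℝ) (ψ : ℝ → ℝ)
    (h : IsCantorSystemC1 K r I ψ)
    (lam : ℝ) (hlam : lam = sSup ((fun x => |deriv ψ x|) '' ⋃ i, I i)) :
    ∃ ρ₀ : ℝ, 0 < ρ₀ ∧ ∀ ρ : ℝ, 0 < ρ → ρ ≤ ρ₀ →
      ∃ F : Finset (Set ℝ),
        (∀ J ∈ F, ∃ a b : ℝ, a ≤ b ∧ J = Icc a b ∧ ρ ≤ b - a ∧ b - a ≤ lam * ρ) ∧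
        (∀ J ∈ F, (J ∩ K).Nonempty) ∧
        (K ⊆ ⋃ J ∈ F, J) ∧
        (∀ J ∈ F, ∀ J' ∈ F, J ≠ J' → Disjoint J J') := by
  obtain ⟨hr, hKc, hIab, hI01, hIdisj, hKI, hfr, ⟨U, hUo, hIU, hdiff, hdcont, hexp⟩,
    hMar, hmix, hKeq⟩ := h
  -- the union of the partition intervals is compact and nonempty
  have hIcomp : ∀ i, IsCompact (I i) := by
    intro i
    obtain ⟨a, b, hab, hI⟩ := hIab i
    rw [hI]; exact isCompact_Icc
  have hUc : IsCompact (⋃ i, I i) := isCompact_iUnion hIcomp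
  have hUne : (⋃ i, I i).Nonempty := by
    obtain ⟨a, b, hab, hI⟩ := hIab ⟨0, hr⟩
    exact ⟨a, mem_iUnion.2 ⟨⟨0, hr⟩, hI ▸ left_mem_Icc.2 hab⟩⟩
  have hcont : ContinuousOn (fun x => |deriv ψ x|) (⋃ i, I i) :=
    (hdcont.mono hIU).abs
  -- lam > 1
  have hlam1 : 1 < lam := by
    obtain ⟨x0, hx0⟩ := hUne
    have h1 : |deriv ψ x0| ≤ lam := by
      rw [hlam]
      exact le_csSup (hUc.image_of_continuousOn hcont).bddAbove (mem_image_of_mem _ hx0)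
    have h2 : 1 < |deriv ψ x0| := hexp x0 (hIU hx0)
    linarith
  -- minimum of |deriv ψ| on ⋃ I i
  obtain ⟨x0, hx0U, hx0min⟩ := hUc.exists_isMinOn hUne hcont
  set μ := |deriv ψ x0| with hμdef
  have hμ1 : 1 < μ := hexp x0 (hIU hx0U)
  have hmin : ∀ x ∈ ⋃ i, I i, μ ≤ |deriv ψ x| := fun x hx => hx0min hx
  have hKint : interior K = ∅ :=
    interior_K_empty K r I ψ U hIU hdiff μ hμ1 hmin hI01 hKeq
  have hK01 : K ⊆ Icc (0:ℝ) 1 := hKI.trans (iUnion_subset hI01)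
  refine ⟨1, one_pos, fun ρ hρ hρ1 => ?_⟩
  obtain ⟨n, hn⟩ := exists_nat_gt ((1:ℝ) / ρ)
  have hbound : K = ∅ ∨ sSup K < sInf K + n * ρ := by
    rcases eq_empty_or_nonempty K with h0 | hne
    · exact Or.inl h0
    · right
      have h1 : sSup K ≤ 1 := Real.sSup_le (fun x hx => (hK01 hx).2) one_pos.le
      have h2 : 0 ≤ sInf K := Real.sInf_nonneg (fun x hx => (hK01 hx).1)
      have h3 : 1 < n * ρ := by
        rw [div_lt_iff₀ hρ] at hn
        linarith
      linarith
  obtain ⟨F, hF1, hF2, hF3, _, hF5⟩ :=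
    greedy_cover K hKint ρ lam hρ hlam1 n K hKc (subset_refl K) hbound
  exact ⟨F, hF1, hF2, hF3, hF5⟩


end
end
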